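/- Let G be a graph on n ≥ 4 nodes (n even) with planted bisection V1, V2. Suppose the induced subgraphs G1 = G[V1] and G2 = G[V2] are both d_in-regular for some d_in ∈ {1,…,n/2 − 1}, and the bipartite graph G0 of edges crossing the bisection is d_out-regular for some d_out ∈ {0,…,n/2}. If d_in − d_out ≥ n/4 − 1, then the cut vector x̄ of the planted bisection is an optimal solution of the metric LP relaxation (LP-P); that is, its objective value |E0| equals the minimum of (LP-P). -/

import Mathlib

noncomputable section
open scoped Classical

/-- `i` and `j` lie on the same side of the planted bisection
`V₁ = {0, …, n/2 - 1}`, `V₂ = {n/2, …, n-1}`. -/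
def sameSide (n : ℕ) (i j : Fin n) : Prop :=
  ((i : ℕ) < n / 2 ↔ (j : ℕ) < n / 2)

/-- The sum of `f i j` over all unordered pairs `{i, j}` with `i < j`. -/
def pairSum (n : ℕ) (f : Fin n → Fin n → ℝ) : ℝ :=
  ∑ i : Fin n, ∑ j : Fin n, if i < j then f i j else 0

/-- Feasibility for the metric LP relaxation (LP-P): symmetry of the indexing by
unordered pairs, the triangle inequalities, the perimeter inequalities, and the
equipartition equality constraint. -/
def LPfeasible (n : ℕ) (x : Fin n → Fin n → ℝ) : Prop :=
  (∀ i j, x i j = x j i) ∧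
  (∀ i j k : Fin n, i ≠ j → i ≠ k → j ≠ k → x i j ≤ x i k + x j k) ∧
  (∀ i j k : Fin n, i < j → j < k → x i j + x i k + x j k ≤ 2) ∧
  pairSum n x = (n : ℝ) ^ 2 / 4

/-- The objective function of (LP-P): `∑_{(i,j) ∈ E} x_{ij}`, each edge counted once. -/
def LPobj (n : ℕ) (G : SimpleGraph (Fin n)) (x : Fin n → Fin n → ℝ) : ℝ :=
  ∑ i : Fin n, ∑ j : Fin n, if i < j ∧ G.Adj i j then x i j else 0

/-- The cut vector of the bisection `(S, Sᶜ)`. -/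
def cutVecOf {n : ℕ} (S : Finset (Fin n)) : Fin n → Fin n → ℝ :=
  fun i j => if (i ∈ S ↔ j ∈ S) then 0 else 1

/-- The cut vector of the planted bisection `V₁ = {0, …, n/2 - 1}`, `V₂ = {n/2, …, n-1}`. -/
def cutVec (n : ℕ) : Fin n → Fin n → ℝ :=
  fun i j => if sameSide n i j then 0 else 1

/-- The LP relaxation (LP-P) for the graph `G` recovers the bisection with cut vector
`xb`: `xb` is feasible, and it is the unique optimal solution (any feasible point
with the same objective value agrees with `xb` on all off-diagonal entries). -/
def LPrecoversOf (n : ℕ) (G : SimpleGraph (Fin n)) (xb : Fin n → Fin n → ℝ) : Prop :=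
  LPfeasible n xb ∧
  ∀ x : Fin n → Fin n → ℝ, LPfeasible n x →
    LPobj n G xb ≤ LPobj n G x ∧
    (LPobj n G x = LPobj n G xb → ∀ i j : Fin n, i ≠ j → x i j = xb i j)

/-- The LP relaxation (LP-P) for `G` recovers the planted bisection
`V₁ = {0, …, n/2 - 1}`, `V₂ = {n/2, …, n-1}`. -/
def LPrecovers (n : ℕ) (G : SimpleGraph (Fin n)) : Prop :=
  LPrecoversOf n G (cutVec n)

/-- The degree of `v` in the graph `G₁ ∪ G₂` of within-part edges of `G`
(with respect to the planted bisection into the first and second half). -/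
def inDeg (n : ℕ) (G : SimpleGraph (Fin n)) (v : Fin n) : ℕ :=
  {w : Fin n | G.Adj v w ∧ sameSide n v w}.ncard

/-- The degree of `v` in the crossing bipartite graph `G₀` of `G`
(with respect to the planted bisection into the first and second half). -/
def outDeg (n : ℕ) (G : SimpleGraph (Fin n)) (v : Fin n) : ℕ :=
  {w : Fin n | G.Adj v w ∧ ¬ sameSide n v w}.ncard

/-! ### Auxiliary lemmas -/

lemma sameSide_refl (n : ℕ) (i : Fin n) : sameSide n i i := Iff.rfl

lemma ne_of_not_same {n : ℕ} {i j : Fin n} (h : ¬ sameSide n i j) : i ≠ j := by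
  intro he; exact h (he ▸ sameSide_refl n i)

lemma mul_ite_sum {n : ℕ} (c : ℝ) (p : Fin n → Prop) {inst : DecidablePred p} :
    (∑ j : Fin n, @ite ℝ (p j) (inst j) (1:ℝ) 0) * c
      = ∑ j : Fin n, @ite ℝ (p j) (inst j) c 0 := by
  rw [Finset.sum_mul]
  apply Finset.sum_congr rfl; intro j _
  by_cases h : p j <;> simp [h]

lemma sum_ind_eq_card {n : ℕ} (p : Fin n → Prop) {inst : DecidablePred p} :
    (∑ j : Fin n, @ite ℝ (p j) (inst j) (1:ℝ) 0)
      = (((@Finset.filter _ p inst (Finset.univ : Finset (Fin n)))).card : ℝ) := by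
  rw [← Finset.sum_filter, Finset.sum_const, nsmul_eq_mul, mul_one]

lemma card_irrel {n : ℕ} (p : Fin n → Prop) (i1 i2 : DecidablePred p) :
    (@Finset.filter _ p i1 (Finset.univ : Finset (Fin n))).card
      = (@Finset.filter _ p i2 (Finset.univ : Finset (Fin n))).card := by
  have h : i1 = i2 := funext fun a => Subsingleton.elim _ _
  rw [h]

lemma ncard_to_sum {n : ℕ} {p : Fin n → Prop} {inst : DecidablePred p} {d : ℕ}
    (h : {w : Fin n | p w}.ncard = d) :
    (∑ j : Fin n, @ite ℝ (p j) (inst j) (1:ℝ) 0) = d := by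
  have hset : {w : Fin n | p w}
      = ((@Finset.filter _ p inst (Finset.univ : Finset (Fin n)) : Finset (Fin n))
          : Set (Fin n)) := by
    ext w
    simp only [Set.mem_setOf_eq, Finset.coe_filter, Finset.mem_univ, true_and]
  rw [hset, Set.ncard_coe_finset] at h
  rw [sum_ind_eq_card, h]

lemma card_filter_lt (n m : ℕ) (h : m ≤ n) :
    ((Finset.univ : Finset (Fin n)).filter fun j : Fin n => (j : ℕ) < m).card = m := by
  have h1 : (((Finset.univ : Finset (Fin n)).filter fun j : Fin n => (j : ℕ) < m).image
      Fin.val) = Finset.range m := by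
    ext k
    simp only [Finset.mem_image, Finset.mem_filter, Finset.mem_range, Finset.mem_univ,
      true_and]
    constructor
    · rintro ⟨j, hj, rfl⟩; exact hj
    · intro hk; exact ⟨⟨k, lt_of_lt_of_le hk h⟩, hk, rfl⟩
  calc ((Finset.univ : Finset (Fin n)).filter fun j : Fin n => (j : ℕ) < m).card
      = (((Finset.univ : Finset (Fin n)).filter fun j : Fin n => (j : ℕ) < m).image
          Fin.val).card := (Finset.card_image_of_injective _ Fin.val_injective).symm
    _ = m := by rw [h1, Finset.card_range]

lemma card_same (n : ℕ) (hn : Even n) (i : Fin n) :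
    ((Finset.univ : Finset (Fin n)).filter fun j : Fin n => sameSide n i j).card = n / 2 := by
  obtain ⟨m, hm⟩ := hn
  by_cases hi : (i : ℕ) < n / 2
  · have h1 : ∀ j : Fin n, sameSide n i j ↔ (j : ℕ) < n / 2 := by
      intro j; unfold sameSide; tauto
    rw [Finset.filter_congr (fun j _ => h1 j)]
    exact card_filter_lt n (n/2) (by omega)
  · have h1 : ∀ j : Fin n, sameSide n i j ↔ ¬ ((j : ℕ) < n / 2) := by
      intro j; unfold sameSide; tauto
    rw [Finset.filter_congr (fun j _ => h1 j)]
    have h2 := Finset.card_filter_add_card_filter_not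
      (s := (Finset.univ : Finset (Fin n))) (p := fun j : Fin n => (j : ℕ) < n / 2)
    rw [card_filter_lt n (n/2) (by omega), Finset.card_univ, Fintype.card_fin] at h2
    have h3 : ((Finset.univ : Finset (Fin n)).filter
        fun j : Fin n => ¬ ((j : ℕ) < n / 2)).card = n - n / 2 := by omega
    rw [h3]; omega

lemma sum_ind_same (n : ℕ) (hn : Even n) (i : Fin n) :
    (∑ j : Fin n, if sameSide n i j then (1:ℝ) else 0) = ((n / 2 : ℕ) : ℝ) := by
  rw [sum_ind_eq_card]
  norm_cast
  exact (card_irrel _ _ _).trans (card_same n hn i)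

lemma sum_ind_opp (n : ℕ) (hn : Even n) (i : Fin n) :
    (∑ j : Fin n, if ¬ sameSide n i j then (1:ℝ) else 0) = ((n / 2 : ℕ) : ℝ) := by
  have key : ∀ j : Fin n, (if ¬ sameSide n i j then (1:ℝ) else 0)
      = 1 - (if sameSide n i j then (1:ℝ) else 0) := by
    intro j; by_cases h : sameSide n i j <;> simp [h]
  rw [Finset.sum_congr rfl (fun j _ => key j), Finset.sum_sub_distrib,
    sum_ind_same n hn i, Finset.sum_const, Finset.card_univ, Fintype.card_fin,
    nsmul_eq_mul, mul_one]
  obtain ⟨m, hm⟩ := hn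
  have h2 : n / 2 = m := by omega
  rw [h2, hm]
  push_cast
  ring

lemma feas_nonneg {n : ℕ} (hn4 : 4 ≤ n) {x : Fin n → Fin n → ℝ}
    (hsymm : ∀ i j, x i j = x j i)
    (htri : ∀ i j k : Fin n, i ≠ j → i ≠ k → j ≠ k → x i j ≤ x i k + x j k)
    {i j : Fin n} (hij : i ≠ j) : 0 ≤ x i j := by
  have hcard : ({i, j} : Finset (Fin n)).card < (Finset.univ : Finset (Fin n)).card := by
    have h1 : ({i, j} : Finset (Fin n)).card ≤ 2 :=
      (Finset.card_insert_le _ _).trans (by simp)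
    have h2 : (Finset.univ : Finset (Fin n)).card = n := by simp
    omega
  have hss : ({i, j} : Finset (Fin n)) ⊂ Finset.univ := by
    refine Finset.ssubset_univ_iff.mpr ?_
    intro hEq; rw [hEq] at hcard; exact lt_irrefl _ hcard
  obtain ⟨k, _, hk⟩ := Finset.exists_of_ssubset hss
  simp only [Finset.mem_insert, Finset.mem_singleton, not_or] at hk
  obtain ⟨hki, hkj⟩ := hk
  have t1 : x i k ≤ x i j + x k j :=
    htri i k j (Ne.symm hki) hij (fun h => hkj h)
  have t2 : x j k ≤ x j i + x k i :=
    htri j k i (Ne.symm hkj) hij.symm (fun h => hki h)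
  have e1 : x k j = x j k := hsymm k j
  have e2 : x j i = x i j := hsymm j i
  have e3 : x k i = x i k := hsymm k i
  linarith

lemma double_sum {n : ℕ} (x : Fin n → Fin n → ℝ) (q : Fin n → Fin n → Prop)
    {i1 : ∀ i j : Fin n, Decidable (i < j ∧ q i j)} {i2 : ∀ i j : Fin n, Decidable (q i j)}
    (hq : ∀ i j, q i j → i ≠ j) (hqs : ∀ i j, q i j → q j i)
    (hsymm : ∀ i j, x i j = x j i) :
    (∑ i : Fin n, ∑ j : Fin n, @ite ℝ (i < j ∧ q i j) (i1 i j) (x i j) 0) * 2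
      = ∑ i : Fin n, ∑ j : Fin n, @ite ℝ (q i j) (i2 i j) (x i j) 0 := by
  have per : ∀ i j : Fin n, (@ite ℝ (q i j) (i2 i j) (x i j) 0)
      = (@ite ℝ (i < j ∧ q i j) (i1 i j) (x i j) 0)
        + (@ite ℝ (j < i ∧ q i j) (Classical.propDecidable _) (x i j) 0) := by
    intro i j
    by_cases ho : q i j
    · rcases lt_or_gt_of_ne (hq i j ho) with h1 | h1
      · rw [if_pos ho, if_pos (⟨h1, ho⟩ : _ ∧ _), if_neg (fun hc => asymm h1 hc.1), add_zero]
      · rw [if_pos ho, if_neg (fun hc => asymm h1 hc.1), if_pos (⟨h1, ho⟩ : _ ∧ _), zero_add]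
    · rw [if_neg ho, if_neg (fun hc => ho hc.2), if_neg (fun hc => ho hc.2), add_zero]
  have hsw : (∑ i : Fin n, ∑ j : Fin n,
        @ite ℝ (j < i ∧ q i j) (Classical.propDecidable _) (x i j) 0)
      = ∑ i : Fin n, ∑ j : Fin n, @ite ℝ (i < j ∧ q i j) (i1 i j) (x i j) 0 := by
    rw [Finset.sum_comm]
    apply Finset.sum_congr rfl; intro i _
    apply Finset.sum_congr rfl; intro j _
    by_cases hc : i < j ∧ q j i
    · rw [if_pos hc, if_pos (⟨hc.1, hqs j i hc.2⟩ : _ ∧ _), hsymm j i]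
    · rw [if_neg hc, if_neg (fun h2 => hc ⟨h2.1, hqs i j h2.2⟩)]
  calc (∑ i : Fin n, ∑ j : Fin n, @ite ℝ (i < j ∧ q i j) (i1 i j) (x i j) 0) * 2
      = (∑ i : Fin n, ∑ j : Fin n, @ite ℝ (i < j ∧ q i j) (i1 i j) (x i j) 0)
        + (∑ i : Fin n, ∑ j : Fin n,
            @ite ℝ (j < i ∧ q i j) (Classical.propDecidable _) (x i j) 0) := by
        rw [hsw]; ring
    _ = ∑ i : Fin n, ∑ j : Fin n, @ite ℝ (q i j) (i2 i j) (x i j) 0 := by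
        rw [← Finset.sum_add_distrib]
        apply Finset.sum_congr rfl; intro i _
        rw [← Finset.sum_add_distrib]
        exact (Finset.sum_congr rfl (fun j _ => (per i j).symm))

lemma star1 {n : ℕ} {G : SimpleGraph (Fin n)} {x : Fin n → Fin n → ℝ} {M : ℝ}
    (hsymm : ∀ i j, x i j = x j i)
    (htri : ∀ i j k : Fin n, i ≠ j → i ≠ k → j ≠ k → x i j ≤ x i k + x j k)
    {dout : ℕ}
    (hdeg : ∀ v : Fin n,
      (∑ w : Fin n, if G.Adj v w ∧ ¬ sameSide n v w then (1:ℝ) else 0) = dout)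
    (hopp : ∀ v : Fin n, (∑ w : Fin n, if ¬ sameSide n v w then (1:ℝ) else 0) = M) :
    (dout : ℝ) * (∑ i : Fin n, ∑ k : Fin n, if ¬ sameSide n i k then x i k else 0)
      ≤ M * (∑ i : Fin n, ∑ j : Fin n,
            if G.Adj i j ∧ ¬ sameSide n i j then x i j else 0)
        + (dout : ℝ) * (∑ i : Fin n, ∑ j : Fin n,
            if i ≠ j ∧ sameSide n i j then x i j else 0) := by
  -- per-pair inequality
  have pair : ∀ i k : Fin n, ¬ sameSide n i k →
      (dout : ℝ) * x i k ≤ ∑ k' : Fin n, if G.Adj i k' ∧ ¬ sameSide n i k' then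
        (x i k' + if k' = k then 0 else x k k') else 0 := by
    intro i k hik
    have hd : (dout : ℝ) * x i k
        = ∑ k' : Fin n, if G.Adj i k' ∧ ¬ sameSide n i k' then x i k else 0 := by
      rw [← hdeg i]
      exact mul_ite_sum (x i k) (fun k' => G.Adj i k' ∧ ¬ sameSide n i k')
    rw [hd]
    apply Finset.sum_le_sum
    intro k' _
    by_cases hc : G.Adj i k' ∧ ¬ sameSide n i k'
    · simp only [if_pos hc]
      by_cases hkk : k' = k
      · simp [hkk]
      · simp only [if_neg hkk]
        exact htri i k k' (ne_of_not_same hik) (ne_of_not_same hc.2) (fun h => hkk h.symm)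
    · simp [hc]
  have step1 : (dout : ℝ) * (∑ i : Fin n, ∑ k : Fin n, if ¬ sameSide n i k then x i k else 0)
      ≤ ∑ i : Fin n, ∑ k : Fin n, if ¬ sameSide n i k then
          (∑ k' : Fin n, if G.Adj i k' ∧ ¬ sameSide n i k' then
            (x i k' + if k' = k then 0 else x k k') else 0) else 0 := by
    rw [Finset.mul_sum]
    apply Finset.sum_le_sum; intro i _
    rw [Finset.mul_sum]
    apply Finset.sum_le_sum; intro k _
    by_cases hik : ¬ sameSide n i k
    · simp only [if_pos hik]; exact pair i k hik
    · simp [hik]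
  refine le_trans step1 (le_of_eq ?_)
  have split : ∀ i k : Fin n, (if ¬ sameSide n i k then
          (∑ k' : Fin n, if G.Adj i k' ∧ ¬ sameSide n i k' then
            (x i k' + if k' = k then 0 else x k k') else 0) else 0)
      = (if ¬ sameSide n i k then
          (∑ k' : Fin n, if G.Adj i k' ∧ ¬ sameSide n i k' then x i k' else 0) else 0)
        + (∑ k' : Fin n, if G.Adj i k' ∧ ¬ sameSide n i k' then
            (if ¬ sameSide n i k ∧ k ≠ k' then x k k' else 0) else 0) := by
    intro i k
    by_cases hik : ¬ sameSide n i k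
    · simp only [if_pos hik, ← Finset.sum_add_distrib]
      apply Finset.sum_congr rfl; intro k' _
      by_cases hc : G.Adj i k' ∧ ¬ sameSide n i k'
      · simp only [if_pos hc]
        by_cases hkk : k' = k
        · simp [hkk, hik]
        · have hkk' : k ≠ k' := fun h => hkk h.symm
          simp [hkk, hik, hkk']
      · simp [hc]
    · simp only [if_neg hik]
      have hz : ∀ k' : Fin n, (if G.Adj i k' ∧ ¬ sameSide n i k' then
          (if ¬ sameSide n i k ∧ k ≠ k' then x k k' else 0) else 0) = 0 := by
        intro k'; by_cases hc : G.Adj i k' ∧ ¬ sameSide n i k' <;> simp [hc, hik]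
      simp [hz]
  calc (∑ i : Fin n, ∑ k : Fin n, if ¬ sameSide n i k then
          (∑ k' : Fin n, if G.Adj i k' ∧ ¬ sameSide n i k' then
            (x i k' + if k' = k then 0 else x k k') else 0) else 0)
      = (∑ i : Fin n, ∑ k : Fin n, if ¬ sameSide n i k then
          (∑ k' : Fin n, if G.Adj i k' ∧ ¬ sameSide n i k' then x i k' else 0) else 0)
        + (∑ i : Fin n, ∑ k : Fin n, ∑ k' : Fin n,
            if G.Adj i k' ∧ ¬ sameSide n i k' then
              (if ¬ sameSide n i k ∧ k ≠ k' then x k k' else 0) else 0) := by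
        rw [← Finset.sum_add_distrib]
        apply Finset.sum_congr rfl; intro i _
        rw [← Finset.sum_add_distrib]
        exact Finset.sum_congr rfl (fun k _ => split i k)
    _ = M * (∑ i : Fin n, ∑ j : Fin n,
            if G.Adj i j ∧ ¬ sameSide n i j then x i j else 0)
        + (dout : ℝ) * (∑ i : Fin n, ∑ j : Fin n,
            if i ≠ j ∧ sameSide n i j then x i j else 0) := by
        congr 1
        · -- T1
          rw [Finset.mul_sum]
          apply Finset.sum_congr rfl; intro i _
          rw [← hopp i]
          exact (mul_ite_sum (∑ k' : Fin n, if G.Adj i k' ∧ ¬ sameSide n i k' then x i k' else 0)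
            (fun k => ¬ sameSide n i k)).symm
        · -- T2
          have stepb : ∀ i k' : Fin n,
              (∑ k : Fin n, if G.Adj i k' ∧ ¬ sameSide n i k' then
                (if ¬ sameSide n i k ∧ k ≠ k' then x k k' else 0) else 0)
              = (if G.Adj i k' ∧ ¬ sameSide n i k' then
                  (∑ k : Fin n, if k ≠ k' ∧ sameSide n k' k then x k k' else 0) else 0) := by
            intro i k'
            by_cases hA : G.Adj i k' ∧ ¬ sameSide n i k'
            · simp only [if_pos hA]
              apply Finset.sum_congr rfl; intro k _
              have hiff : (¬ sameSide n i k ∧ k ≠ k') ↔ (k ≠ k' ∧ sameSide n k' k) := by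
                have h2 := hA.2
                unfold sameSide at *
                constructor
                · rintro ⟨h3, h4⟩; exact ⟨h4, by tauto⟩
                · rintro ⟨h4, h3⟩; exact ⟨by tauto, h4⟩
              by_cases hco : ¬ sameSide n i k ∧ k ≠ k'
              · rw [if_pos hco, if_pos (hiff.mp hco)]
              · rw [if_neg hco, if_neg (fun hc2 => hco (hiff.mpr hc2))]
            · simp [hA]
          calc (∑ i : Fin n, ∑ k : Fin n, ∑ k' : Fin n,
                  if G.Adj i k' ∧ ¬ sameSide n i k' then
                    (if ¬ sameSide n i k ∧ k ≠ k' then x k k' else 0) else 0)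
              = ∑ i : Fin n, ∑ k' : Fin n, (if G.Adj i k' ∧ ¬ sameSide n i k' then
                  (∑ k : Fin n, if k ≠ k' ∧ sameSide n k' k then x k k' else 0) else 0) := by
                apply Finset.sum_congr rfl; intro i _
                rw [Finset.sum_comm]
                exact Finset.sum_congr rfl (fun k' _ => stepb i k')
            _ = ∑ k' : Fin n, ∑ i : Fin n, (if G.Adj k' i ∧ ¬ sameSide n k' i then
                  (∑ k : Fin n, if k ≠ k' ∧ sameSide n k' k then x k k' else 0) else 0) := by
                rw [Finset.sum_comm]
                apply Finset.sum_congr rfl; intro k' _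
                apply Finset.sum_congr rfl; intro i _
                have hiff : (G.Adj i k' ∧ ¬ sameSide n i k')
                    ↔ (G.Adj k' i ∧ ¬ sameSide n k' i) := by
                  rw [G.adj_comm]
                  unfold sameSide; tauto
                by_cases hA : G.Adj i k' ∧ ¬ sameSide n i k'
                · rw [if_pos hA, if_pos (hiff.mp hA)]
                · rw [if_neg hA, if_neg (fun hc2 => hA (hiff.mpr hc2))]
            _ = (dout : ℝ) * (∑ k' : Fin n, ∑ k : Fin n,
                  if k ≠ k' ∧ sameSide n k' k then x k k' else 0) := by
                rw [Finset.mul_sum]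
                apply Finset.sum_congr rfl; intro k' _
                rw [← hdeg k']
                exact (mul_ite_sum (∑ k : Fin n, if k ≠ k' ∧ sameSide n k' k then x k k' else 0)
                  (fun i => G.Adj k' i ∧ ¬ sameSide n k' i)).symm
            _ = (dout : ℝ) * (∑ i : Fin n, ∑ j : Fin n,
                  if i ≠ j ∧ sameSide n i j then x i j else 0) := by
                congr 1
                apply Finset.sum_congr rfl; intro k' _
                apply Finset.sum_congr rfl; intro k _
                have hiff : (k ≠ k' ∧ sameSide n k' k) ↔ (k' ≠ k ∧ sameSide n k' k) := by
                  constructor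
                  · rintro ⟨h1, h2⟩; exact ⟨h1.symm, h2⟩
                  · rintro ⟨h1, h2⟩; exact ⟨h1.symm, h2⟩
                by_cases hco : k ≠ k' ∧ sameSide n k' k
                · rw [if_pos hco, if_pos (hiff.mp hco), hsymm k k']
                · rw [if_neg hco, if_neg (fun hc2 => hco (hiff.mpr hc2))]
lemma star2_pair {n : ℕ} {G : SimpleGraph (Fin n)} {x : Fin n → Fin n → ℝ} {din : ℕ} {M : ℝ}
    (htri : ∀ i j k : Fin n, i ≠ j → i ≠ k → j ≠ k → x i j ≤ x i k + x j k)
    (hnn : ∀ i j : Fin n, i ≠ j → 0 ≤ x i j)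
    (hdegin : ∀ v : Fin n,
      (∑ w : Fin n, if G.Adj v w ∧ sameSide n v w then (1:ℝ) else 0) = din)
    (hsame : ∀ v : Fin n, (∑ w : Fin n, if sameSide n v w then (1:ℝ) else 0) = M)
    {a b : Fin n} (hab : a ≠ b) (hs : sameSide n a b) (hna : ¬ G.Adj a b) :
    (2 * (din:ℝ) + 2 - M) * x a b
      ≤ (∑ c : Fin n, if G.Adj a c ∧ sameSide n a c then x a c else 0)
        + (∑ c : Fin n, if G.Adj b c ∧ sameSide n b c then x b c else 0) := by
  have hunion : (∑ c : Fin n, if (G.Adj a c ∧ sameSide n a c) ∨ (G.Adj b c ∧ sameSide n b c)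
      then (1:ℝ) else 0) ≤ M - 2 := by
    have hpt : ∀ c : Fin n,
        (if (G.Adj a c ∧ sameSide n a c) ∨ (G.Adj b c ∧ sameSide n b c) then (1:ℝ) else 0)
        ≤ (if sameSide n a c then (1:ℝ) else 0)
          - (if c = a then (1:ℝ) else 0) - (if c = b then (1:ℝ) else 0) := by
      intro c
      by_cases hu : (G.Adj a c ∧ sameSide n a c) ∨ (G.Adj b c ∧ sameSide n b c)
      · have hsac : sameSide n a c := by
          rcases hu with h1 | h1
          · exact h1.2
          · exact Iff.trans hs h1.2
        have hca : c ≠ a := by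
          intro h
          rcases hu with h1 | h1
          · exact G.loopless.irrefl a (h ▸ h1.1)
          · exact hna ((h ▸ h1.1).symm)
        have hcb : c ≠ b := by
          intro h
          rcases hu with h1 | h1
          · exact hna (h ▸ h1.1)
          · exact G.loopless.irrefl b (h ▸ h1.1)
        rw [if_pos hu, if_pos hsac, if_neg hca, if_neg hcb]
        norm_num
      · rw [if_neg hu]
        by_cases h2 : c = a
        · have hsac : sameSide n a c := by rw [h2]; exact sameSide_refl n a
          have hcb : ¬ c = b := fun h => hab (by rw [← h2, h])
          rw [if_pos hsac, if_pos h2, if_neg hcb]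
          norm_num
        · by_cases h3 : c = b
          · have hsac : sameSide n a c := by rw [h3]; exact hs
            rw [if_pos hsac, if_neg h2, if_pos h3]
            norm_num
          · rw [if_neg h2, if_neg h3]
            by_cases h1 : sameSide n a c
            · rw [if_pos h1]; norm_num
            · rw [if_neg h1]; norm_num
    calc (∑ c : Fin n, if (G.Adj a c ∧ sameSide n a c) ∨ (G.Adj b c ∧ sameSide n b c)
            then (1:ℝ) else 0)
        ≤ ∑ c : Fin n, ((if sameSide n a c then (1:ℝ) else 0)
            - (if c = a then (1:ℝ) else 0) - (if c = b then (1:ℝ) else 0)) :=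
          Finset.sum_le_sum (fun c _ => hpt c)
      _ = M - 2 := by
          rw [Finset.sum_sub_distrib, Finset.sum_sub_distrib, hsame a]
          have ha1 : (∑ c : Fin n, if c = a then (1:ℝ) else 0) = 1 := by
            simp
          have hb1 : (∑ c : Fin n, if c = b then (1:ℝ) else 0) = 1 := by
            simp
          rw [ha1, hb1]; ring
  have hinter : (2 * (din:ℝ) + 2 - M)
      ≤ ∑ c : Fin n, if (G.Adj a c ∧ sameSide n a c) ∧ (G.Adj b c ∧ sameSide n b c)
          then (1:ℝ) else 0 := by
    have hpt : ∀ c : Fin n,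
        (if (G.Adj a c ∧ sameSide n a c) ∧ (G.Adj b c ∧ sameSide n b c) then (1:ℝ) else 0)
        = (if G.Adj a c ∧ sameSide n a c then (1:ℝ) else 0)
          + (if G.Adj b c ∧ sameSide n b c then (1:ℝ) else 0)
          - (if (G.Adj a c ∧ sameSide n a c) ∨ (G.Adj b c ∧ sameSide n b c)
              then (1:ℝ) else 0) := by
      intro c
      by_cases h1 : G.Adj a c ∧ sameSide n a c <;> by_cases h2 : G.Adj b c ∧ sameSide n b c
      · rw [if_pos (⟨h1, h2⟩ : _ ∧ _), if_pos h1, if_pos h2, if_pos (Or.inl h1)]; ring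
      · rw [if_neg (fun hc => h2 hc.2), if_pos h1, if_neg h2, if_pos (Or.inl h1)]; ring
      · rw [if_neg (fun hc => h1 hc.1), if_neg h1, if_pos h2, if_pos (Or.inr h2)]; ring
      · rw [if_neg (fun hc => h1 hc.1), if_neg h1, if_neg h2,
          if_neg (fun hc => hc.elim h1 h2)]; ring
    have heq : (∑ c : Fin n, if (G.Adj a c ∧ sameSide n a c) ∧ (G.Adj b c ∧ sameSide n b c)
          then (1:ℝ) else 0)
        = (din:ℝ) + (din:ℝ)
          - (∑ c : Fin n, if (G.Adj a c ∧ sameSide n a c) ∨ (G.Adj b c ∧ sameSide n b c)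
              then (1:ℝ) else 0) := by
      rw [Finset.sum_congr rfl (fun c _ => hpt c), Finset.sum_sub_distrib,
        Finset.sum_add_distrib, hdegin a, hdegin b]
    rw [heq]
    linarith
  have hx : 0 ≤ x a b := hnn a b hab
  have step1 : (2 * (din:ℝ) + 2 - M) * x a b
      ≤ (∑ c : Fin n, if (G.Adj a c ∧ sameSide n a c) ∧ (G.Adj b c ∧ sameSide n b c)
          then (1:ℝ) else 0) * x a b :=
    mul_le_mul_of_nonneg_right hinter hx
  have step2 : (∑ c : Fin n, if (G.Adj a c ∧ sameSide n a c) ∧ (G.Adj b c ∧ sameSide n b c)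
          then (1:ℝ) else 0) * x a b
      ≤ (∑ c : Fin n, if G.Adj a c ∧ sameSide n a c then x a c else 0)
        + (∑ c : Fin n, if G.Adj b c ∧ sameSide n b c then x b c else 0) := by
    have hrw : (∑ c : Fin n, if (G.Adj a c ∧ sameSide n a c) ∧ (G.Adj b c ∧ sameSide n b c)
          then (1:ℝ) else 0) * x a b
        = ∑ c : Fin n, if (G.Adj a c ∧ sameSide n a c) ∧ (G.Adj b c ∧ sameSide n b c)
            then x a b else 0 :=
      mul_ite_sum (x a b) (fun c => (G.Adj a c ∧ sameSide n a c) ∧ (G.Adj b c ∧ sameSide n b c))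
    rw [hrw, ← Finset.sum_add_distrib]
    apply Finset.sum_le_sum
    intro c _
    by_cases hc : (G.Adj a c ∧ sameSide n a c) ∧ (G.Adj b c ∧ sameSide n b c)
    · have h1 : a ≠ c := G.ne_of_adj hc.1.1
      have h2 : b ≠ c := G.ne_of_adj hc.2.1
      have ht := htri a b c hab h1 h2
      rw [if_pos hc, if_pos hc.1, if_pos hc.2]
      linarith
    · rw [if_neg hc]
      have h1 : 0 ≤ (if G.Adj a c ∧ sameSide n a c then x a c else 0) := by
        by_cases h2 : G.Adj a c ∧ sameSide n a c
        · rw [if_pos h2]; exact hnn a c (G.ne_of_adj h2.1)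
        · rw [if_neg h2]
      have h2 : 0 ≤ (if G.Adj b c ∧ sameSide n b c then x b c else 0) := by
        by_cases h3 : G.Adj b c ∧ sameSide n b c
        · rw [if_pos h3]; exact hnn b c (G.ne_of_adj h3.1)
        · rw [if_neg h3]
      linarith
  exact step1.trans step2

lemma star2 {n : ℕ} {G : SimpleGraph (Fin n)} {x : Fin n → Fin n → ℝ} {din : ℕ} {M CNT : ℝ}
    (htri : ∀ i j k : Fin n, i ≠ j → i ≠ k → j ≠ k → x i j ≤ x i k + x j k)
    (hnn : ∀ i j : Fin n, i ≠ j → 0 ≤ x i j)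
    (hdegin : ∀ v : Fin n,
      (∑ w : Fin n, if G.Adj v w ∧ sameSide n v w then (1:ℝ) else 0) = din)
    (hsame : ∀ v : Fin n, (∑ w : Fin n, if sameSide n v w then (1:ℝ) else 0) = M)
    (hcnt : ∀ v : Fin n,
      (∑ w : Fin n, if v ≠ w ∧ sameSide n v w ∧ ¬ G.Adj v w then (1:ℝ) else 0) = CNT) :
    (2 * (din:ℝ) + 2 - M) * (∑ a : Fin n, ∑ b : Fin n,
        if a ≠ b ∧ sameSide n a b ∧ ¬ G.Adj a b then x a b else 0)
      ≤ 2 * CNT * (∑ i : Fin n, ∑ j : Fin n,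
          if G.Adj i j ∧ sameSide n i j then x i j else 0) := by
  have key : (2 * (din:ℝ) + 2 - M) * (∑ a : Fin n, ∑ b : Fin n,
        if a ≠ b ∧ sameSide n a b ∧ ¬ G.Adj a b then x a b else 0)
      ≤ ∑ a : Fin n, ∑ b : Fin n, if a ≠ b ∧ sameSide n a b ∧ ¬ G.Adj a b then
          ((∑ c : Fin n, if G.Adj a c ∧ sameSide n a c then x a c else 0)
            + (∑ c : Fin n, if G.Adj b c ∧ sameSide n b c then x b c else 0)) else 0 := by
    rw [Finset.mul_sum]
    apply Finset.sum_le_sum; intro a _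
    rw [Finset.mul_sum]
    apply Finset.sum_le_sum; intro b _
    by_cases hc : a ≠ b ∧ sameSide n a b ∧ ¬ G.Adj a b
    · rw [if_pos hc, if_pos hc]
      exact star2_pair htri hnn hdegin hsame hc.1 hc.2.1 hc.2.2
    · rw [if_neg hc, if_neg hc, mul_zero]
  refine key.trans (le_of_eq ?_)
  have split : ∀ a b : Fin n, (if a ≠ b ∧ sameSide n a b ∧ ¬ G.Adj a b then
          ((∑ c : Fin n, if G.Adj a c ∧ sameSide n a c then x a c else 0)
            + (∑ c : Fin n, if G.Adj b c ∧ sameSide n b c then x b c else 0)) else 0)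
      = (if a ≠ b ∧ sameSide n a b ∧ ¬ G.Adj a b then
          (∑ c : Fin n, if G.Adj a c ∧ sameSide n a c then x a c else 0) else 0)
        + (if a ≠ b ∧ sameSide n a b ∧ ¬ G.Adj a b then
          (∑ c : Fin n, if G.Adj b c ∧ sameSide n b c then x b c else 0) else 0) := by
    intro a b
    by_cases hc : a ≠ b ∧ sameSide n a b ∧ ¬ G.Adj a b
    · rw [if_pos hc, if_pos hc, if_pos hc]
    · rw [if_neg hc, if_neg hc, if_neg hc, add_zero]
  calc (∑ a : Fin n, ∑ b : Fin n, if a ≠ b ∧ sameSide n a b ∧ ¬ G.Adj a b then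
          ((∑ c : Fin n, if G.Adj a c ∧ sameSide n a c then x a c else 0)
            + (∑ c : Fin n, if G.Adj b c ∧ sameSide n b c then x b c else 0)) else 0)
      = (∑ a : Fin n, ∑ b : Fin n, if a ≠ b ∧ sameSide n a b ∧ ¬ G.Adj a b then
          (∑ c : Fin n, if G.Adj a c ∧ sameSide n a c then x a c else 0) else 0)
        + (∑ a : Fin n, ∑ b : Fin n, if a ≠ b ∧ sameSide n a b ∧ ¬ G.Adj a b then
          (∑ c : Fin n, if G.Adj b c ∧ sameSide n b c then x b c else 0) else 0) := by
        rw [← Finset.sum_add_distrib]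
        apply Finset.sum_congr rfl; intro a _
        rw [← Finset.sum_add_distrib]
        exact Finset.sum_congr rfl (fun b _ => split a b)
    _ = 2 * CNT * (∑ i : Fin n, ∑ j : Fin n,
          if G.Adj i j ∧ sameSide n i j then x i j else 0) := by
        have t1 : (∑ a : Fin n, ∑ b : Fin n, if a ≠ b ∧ sameSide n a b ∧ ¬ G.Adj a b then
            (∑ c : Fin n, if G.Adj a c ∧ sameSide n a c then x a c else 0) else 0)
            = CNT * (∑ i : Fin n, ∑ j : Fin n,
              if G.Adj i j ∧ sameSide n i j then x i j else 0) := by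
          rw [Finset.mul_sum]
          apply Finset.sum_congr rfl; intro a _
          rw [← hcnt a]
          exact (mul_ite_sum (∑ c : Fin n, if G.Adj a c ∧ sameSide n a c then x a c else 0)
            (fun b => a ≠ b ∧ sameSide n a b ∧ ¬ G.Adj a b)).symm
        have t2 : (∑ a : Fin n, ∑ b : Fin n, if a ≠ b ∧ sameSide n a b ∧ ¬ G.Adj a b then
            (∑ c : Fin n, if G.Adj b c ∧ sameSide n b c then x b c else 0) else 0)
            = CNT * (∑ i : Fin n, ∑ j : Fin n,
              if G.Adj i j ∧ sameSide n i j then x i j else 0) := by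
          rw [Finset.sum_comm]
          rw [Finset.mul_sum]
          apply Finset.sum_congr rfl; intro b _
          have hconv : ∀ a : Fin n, (if a ≠ b ∧ sameSide n a b ∧ ¬ G.Adj a b then
              (∑ c : Fin n, if G.Adj b c ∧ sameSide n b c then x b c else 0) else 0)
              = (if b ≠ a ∧ sameSide n b a ∧ ¬ G.Adj b a then
              (∑ c : Fin n, if G.Adj b c ∧ sameSide n b c then x b c else 0) else 0) := by
            intro a
            have hiff : (a ≠ b ∧ sameSide n a b ∧ ¬ G.Adj a b)
                ↔ (b ≠ a ∧ sameSide n b a ∧ ¬ G.Adj b a) := by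
              rw [G.adj_comm]
              unfold sameSide
              constructor
              · rintro ⟨u1, u2, u3⟩; exact ⟨u1.symm, u2.symm, u3⟩
              · rintro ⟨u1, u2, u3⟩; exact ⟨u1.symm, u2.symm, u3⟩
            by_cases hc : a ≠ b ∧ sameSide n a b ∧ ¬ G.Adj a b
            · rw [if_pos hc, if_pos (hiff.mp hc)]
            · rw [if_neg hc, if_neg (fun h => hc (hiff.mpr h))]
          rw [Finset.sum_congr rfl (fun a _ => hconv a), ← hcnt b]
          exact (mul_ite_sum (∑ c : Fin n, if G.Adj b c ∧ sameSide n b c then x b c else 0)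
            (fun a => b ≠ a ∧ sameSide n b a ∧ ¬ G.Adj b a)).symm
        rw [t1, t2]; ring

lemma cutVec_feasible (n : ℕ) (hn : Even n) (hn4 : 4 ≤ n) :
    LPfeasible n (cutVec n) := by
  obtain ⟨m, hm⟩ := hn
  refine ⟨?_, ?_, ?_, ?_⟩
  · intro i j
    unfold cutVec sameSide
    by_cases hi : (i : ℕ) < n / 2 <;> by_cases hj : (j : ℕ) < n / 2 <;> simp [hi, hj]
  · intro i j k _ _ _
    unfold cutVec sameSide
    by_cases hi : (i : ℕ) < n / 2 <;> by_cases hj : (j : ℕ) < n / 2 <;>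
      by_cases hk : (k : ℕ) < n / 2 <;> simp [hi, hj, hk] <;> norm_num
  · intro i j k _ _
    unfold cutVec sameSide
    by_cases hi : (i : ℕ) < n / 2 <;> by_cases hj : (j : ℕ) < n / 2 <;>
      by_cases hk : (k : ℕ) < n / 2 <;> simp [hi, hj, hk] <;> norm_num
  · unfold pairSum
    have key : ∀ i j : Fin n, (if i < j then cutVec n i j else 0)
        = (if (i < j ∧ ¬ sameSide n i j) then (1:ℝ) else 0) := by
      intro i j
      unfold cutVec
      by_cases h1 : i < j <;> by_cases h2 : sameSide n i j <;> simp [h1, h2]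
    simp only [key]
    have count : ∀ i j : Fin n, ((if (i < j ∧ ¬ sameSide n i j) then (1:ℝ) else 0)
        + (if (j < i ∧ ¬ sameSide n j i) then (1:ℝ) else 0))
        = (if ¬ sameSide n i j then (1:ℝ) else 0) := by
      intro i j
      by_cases hs : sameSide n i j
      · have hs' : sameSide n j i := by unfold sameSide at *; tauto
        simp [hs, hs']
      · have hs' : ¬ sameSide n j i := by unfold sameSide at *; tauto
        have hne : i ≠ j := ne_of_not_same hs
        rcases lt_or_gt_of_ne hne with h1 | h1
        · simp [h1, not_lt.mpr (le_of_lt h1), hs, hs']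
        · simp [h1, not_lt.mpr (le_of_lt h1), hs, hs']
    have double : (2:ℝ) * (∑ i : Fin n, ∑ j : Fin n,
        if (i < j ∧ ¬ sameSide n i j) then (1:ℝ) else 0)
        = ∑ i : Fin n, ∑ j : Fin n, if ¬ sameSide n i j then (1:ℝ) else 0 := by
      rw [two_mul]
      nth_rewrite 2 [Finset.sum_comm]
      rw [← Finset.sum_add_distrib]
      apply Finset.sum_congr rfl; intro i _
      rw [← Finset.sum_add_distrib]
      apply Finset.sum_congr rfl; intro j _
      exact count i j
    have rcount : (∑ i : Fin n, ∑ j : Fin n, if ¬ sameSide n i j then (1:ℝ) else 0)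
        = (n : ℝ) ^ 2 / 2 := by
      have inner : ∀ i : Fin n, (∑ j : Fin n, if ¬ sameSide n i j then (1:ℝ) else 0)
          = ((n : ℝ) / 2) := by
        intro i
        rw [sum_ind_opp n ⟨m, hm⟩ i]
        have h2 : n / 2 = m := by omega
        rw [h2, hm]; push_cast; ring
      rw [Finset.sum_congr rfl (fun i _ => inner i), Finset.sum_const,
        Finset.card_univ, Fintype.card_fin, nsmul_eq_mul]
      ring
    have hfin : (2:ℝ) * (∑ i : Fin n, ∑ j : Fin n,
        if (i < j ∧ ¬ sameSide n i j) then (1:ℝ) else 0) = (n:ℝ)^2/2 := by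
      rw [double, rcount]
    linarith


/-- If `G₁` and `G₂` are `d_in`-regular with
`d_in ∈ {1, …, n/2 - 1}`, `G₀` is `d_out`-regular with `d_out ∈ {0, …, n/2}`, and
`d_in - d_out ≥ n/4 - 1`, then the cut vector of the planted bisection is an optimal
solution of the metric LP relaxation (LP-P). -/
theorem lp_optimality_regular (n : ℕ) (hn : Even n) (hn4 : 4 ≤ n)
    (G : SimpleGraph (Fin n)) (din dout : ℕ)
    (hdin1 : 1 ≤ din) (hdin2 : din ≤ n / 2 - 1) (hdout : dout ≤ n / 2)
    (hreg12 : ∀ v : Fin n, inDeg n G v = din)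
    (hreg0 : ∀ v : Fin n, outDeg n G v = dout)
    (h : (din : ℝ) - (dout : ℝ) ≥ (n : ℝ) / 4 - 1) :
    LPfeasible n (cutVec n) ∧
      ∀ x : Fin n → Fin n → ℝ, LPfeasible n x →
        LPobj n G (cutVec n) ≤ LPobj n G x := by
  have hfeas := cutVec_feasible n hn hn4
  refine ⟨hfeas, ?_⟩
  intro x hx
  obtain ⟨hsymm, htri, hper, hsum⟩ := hx
  obtain ⟨m, hm⟩ := hn
  have hm2 : n / 2 = m := by omega
  -- real abbreviations
  have hnn : ∀ i j : Fin n, i ≠ j → 0 ≤ x i j := fun i j hij =>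
    feas_nonneg hn4 hsymm htri hij
  -- degree sums
  have hdegin : ∀ v : Fin n,
      (∑ w : Fin n, if G.Adj v w ∧ sameSide n v w then (1:ℝ) else 0) = (din : ℝ) :=
    fun v => ncard_to_sum (hreg12 v)
  have hdegout : ∀ v : Fin n,
      (∑ w : Fin n, if G.Adj v w ∧ ¬ sameSide n v w then (1:ℝ) else 0) = (dout : ℝ) :=
    fun v => ncard_to_sum (hreg0 v)
  have hsameS : ∀ v : Fin n,
      (∑ w : Fin n, if sameSide n v w then (1:ℝ) else 0) = ((n / 2 : ℕ) : ℝ) :=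
    fun v => sum_ind_same n ⟨m, hm⟩ v
  have hoppS : ∀ v : Fin n,
      (∑ w : Fin n, if ¬ sameSide n v w then (1:ℝ) else 0) = ((n / 2 : ℕ) : ℝ) :=
    fun v => sum_ind_opp n ⟨m, hm⟩ v
  -- non-neighbour count
  have hcnt : ∀ v : Fin n,
      (∑ w : Fin n, if v ≠ w ∧ sameSide n v w ∧ ¬ G.Adj v w then (1:ℝ) else 0)
        = ((n / 2 : ℕ) : ℝ) - 1 - (din : ℝ) := by
    intro v
    have per : ∀ w : Fin n, (if sameSide n v w then (1:ℝ) else 0)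
        = (if w = v then (1:ℝ) else 0)
          + (if G.Adj v w ∧ sameSide n v w then (1:ℝ) else 0)
          + (if v ≠ w ∧ sameSide n v w ∧ ¬ G.Adj v w then (1:ℝ) else 0) := by
      intro w
      by_cases h1 : w = v
      · have h2 : sameSide n v w := by rw [h1]; exact sameSide_refl n v
        have h3 : ¬ (G.Adj v w ∧ sameSide n v w) := fun hc => G.loopless.irrefl v (h1 ▸ hc.1)
        have h4 : ¬ (v ≠ w ∧ sameSide n v w ∧ ¬ G.Adj v w) := fun hc => hc.1 h1.symm
        rw [if_pos h2, if_pos h1, if_neg h3, if_neg h4]; ring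
      · by_cases h2 : sameSide n v w
        · by_cases h5 : G.Adj v w
          · have h4 : ¬ (v ≠ w ∧ sameSide n v w ∧ ¬ G.Adj v w) := fun hc => hc.2.2 h5
            rw [if_pos h2, if_neg h1, if_pos (⟨h5, h2⟩ : _ ∧ _), if_neg h4]; ring
          · have h3 : ¬ (G.Adj v w ∧ sameSide n v w) := fun hc => h5 hc.1
            have h4 : v ≠ w ∧ sameSide n v w ∧ ¬ G.Adj v w :=
              ⟨fun hc => h1 hc.symm, h2, h5⟩
            rw [if_pos h2, if_neg h1, if_neg h3, if_pos h4]; ring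
        · have h3 : ¬ (G.Adj v w ∧ sameSide n v w) := fun hc => h2 hc.2
          have h4 : ¬ (v ≠ w ∧ sameSide n v w ∧ ¬ G.Adj v w) := fun hc => h2 hc.2.1
          rw [if_neg h2, if_neg h1, if_neg h3, if_neg h4]; ring
    have hsumeq := Finset.sum_congr rfl (fun w (_ : w ∈ Finset.univ) => per w)
    rw [hsameS v] at hsumeq
    rw [Finset.sum_add_distrib, Finset.sum_add_distrib] at hsumeq
    have e1 : (∑ w : Fin n, if w = v then (1:ℝ) else 0) = 1 := by simp
    rw [e1, hdegin v] at hsumeq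
    linarith
  -- main quantities
  have hstar1 := star1 hsymm htri hdegout hoppS
  have hstar2 := star2 htri hnn hdegin hsameS hcnt
  -- splitting identities
  have hWsplit : (∑ i : Fin n, ∑ j : Fin n, if i ≠ j ∧ sameSide n i j then x i j else 0)
      = (∑ i : Fin n, ∑ j : Fin n, if G.Adj i j ∧ sameSide n i j then x i j else 0)
        + (∑ i : Fin n, ∑ j : Fin n,
            if i ≠ j ∧ sameSide n i j ∧ ¬ G.Adj i j then x i j else 0) := by
    rw [← Finset.sum_add_distrib]
    apply Finset.sum_congr rfl; intro i _
    rw [← Finset.sum_add_distrib]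
    apply Finset.sum_congr rfl; intro j _
    by_cases h1 : i ≠ j ∧ sameSide n i j
    · by_cases h2 : G.Adj i j
      · rw [if_pos h1, if_pos (⟨h2, h1.2⟩ : _ ∧ _),
          if_neg (fun hc => hc.2.2 h2), add_zero]
      · rw [if_pos h1, if_neg (fun hc => h2 hc.1),
          if_pos (⟨h1.1, h1.2, h2⟩ : _ ∧ _ ∧ _), zero_add]
    · have h3 : ¬ (G.Adj i j ∧ sameSide n i j) := by
        intro hc; exact h1 ⟨G.ne_of_adj hc.1, hc.2⟩
      have h4 : ¬ (i ≠ j ∧ sameSide n i j ∧ ¬ G.Adj i j) := by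
        intro hc; exact h1 ⟨hc.1, hc.2.1⟩
      rw [if_neg h1, if_neg h3, if_neg h4, add_zero]
  have htotal : (∑ i : Fin n, ∑ j : Fin n, if i ≠ j ∧ sameSide n i j then x i j else 0)
      + (∑ i : Fin n, ∑ j : Fin n, if ¬ sameSide n i j then x i j else 0)
      = (n : ℝ) ^ 2 / 2 := by
    have hd : (∑ i : Fin n, ∑ j : Fin n, if i < j ∧ i ≠ j then x i j else 0) * 2
        = ∑ i : Fin n, ∑ j : Fin n, if i ≠ j then x i j else 0 :=
      double_sum x (fun i j => i ≠ j) (fun i j hc => hc) (fun i j hc => hc.symm) hsymm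
    have hps : (∑ i : Fin n, ∑ j : Fin n, if i < j ∧ i ≠ j then x i j else 0)
        = pairSum n x := by
      unfold pairSum
      apply Finset.sum_congr rfl; intro i _
      apply Finset.sum_congr rfl; intro j _
      by_cases h1 : i < j
      · rw [if_pos (⟨h1, ne_of_lt h1⟩ : _ ∧ _), if_pos h1]
      · rw [if_neg (fun hc => h1 hc.1), if_neg h1]
    have hsplit : (∑ i : Fin n, ∑ j : Fin n, if i ≠ j then x i j else 0)
        = (∑ i : Fin n, ∑ j : Fin n, if i ≠ j ∧ sameSide n i j then x i j else 0)
          + (∑ i : Fin n, ∑ j : Fin n, if ¬ sameSide n i j then x i j else 0) := by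
      rw [← Finset.sum_add_distrib]
      apply Finset.sum_congr rfl; intro i _
      rw [← Finset.sum_add_distrib]
      apply Finset.sum_congr rfl; intro j _
      by_cases h1 : i ≠ j
      · by_cases h2 : sameSide n i j
        · rw [if_pos h1, if_pos (⟨h1, h2⟩ : _ ∧ _), if_neg (fun hc => hc h2), add_zero]
        · rw [if_pos h1, if_neg (fun hc => h2 hc.2), if_pos h2, zero_add]
      · have h2 : sameSide n i j := by
          push_neg at h1; rw [h1]; exact sameSide_refl n j
        rw [if_neg h1, if_neg (fun hc => h1 hc.1), if_neg (fun hc => hc h2), add_zero]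
    rw [← hsplit, ← hd, hps, hsum]
    ring
  have hobj : LPobj n G x * 2
      = (∑ i : Fin n, ∑ j : Fin n, if G.Adj i j ∧ sameSide n i j then x i j else 0)
        + (∑ i : Fin n, ∑ j : Fin n, if G.Adj i j ∧ ¬ sameSide n i j then x i j else 0) := by
    have hd : (∑ i : Fin n, ∑ j : Fin n, if i < j ∧ G.Adj i j then x i j else 0) * 2
        = ∑ i : Fin n, ∑ j : Fin n, if G.Adj i j then x i j else 0 :=
      double_sum x G.Adj (fun i j hc => G.ne_of_adj hc) (fun i j hc => hc.symm) hsymm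
    unfold LPobj
    rw [hd]
    rw [← Finset.sum_add_distrib]
    apply Finset.sum_congr rfl; intro i _
    rw [← Finset.sum_add_distrib]
    apply Finset.sum_congr rfl; intro j _
    by_cases h1 : G.Adj i j
    · by_cases h2 : sameSide n i j
      · rw [if_pos h1, if_pos (⟨h1, h2⟩ : _ ∧ _), if_neg (fun hc => hc.2 h2), add_zero]
      · rw [if_pos h1, if_neg (fun hc => h2 hc.2), if_pos (⟨h1, h2⟩ : _ ∧ _), zero_add]
    · rw [if_neg h1, if_neg (fun hc => h1 hc.1), if_neg (fun hc => h1 hc.1), add_zero]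
  have hcut : LPobj n G (cutVec n) * 2 = 2 * ((n / 2 : ℕ) : ℝ) * (dout : ℝ) := by
    have hcsymm : ∀ i j, cutVec n i j = cutVec n j i := hfeas.1
    have hd : (∑ i : Fin n, ∑ j : Fin n, if i < j ∧ G.Adj i j then cutVec n i j else 0) * 2
        = ∑ i : Fin n, ∑ j : Fin n, if G.Adj i j then cutVec n i j else 0 :=
      double_sum (cutVec n) G.Adj (fun i j hc => G.ne_of_adj hc) (fun i j hc => hc.symm) hcsymm
    unfold LPobj
    rw [hd]
    have per : ∀ i j : Fin n, (if G.Adj i j then cutVec n i j else 0)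
        = (if G.Adj i j ∧ ¬ sameSide n i j then (1:ℝ) else 0) := by
      intro i j
      unfold cutVec
      by_cases h1 : G.Adj i j
      · by_cases h2 : sameSide n i j
        · rw [if_pos h1, if_pos h2, if_neg (fun hc => hc.2 h2)]
        · rw [if_pos h1, if_neg h2, if_pos (⟨h1, h2⟩ : _ ∧ _)]
      · rw [if_neg h1, if_neg (fun hc => h1 hc.1)]
    rw [Finset.sum_congr rfl (fun i _ => Finset.sum_congr rfl (fun j _ => per i j))]
    rw [Finset.sum_congr rfl (fun i (_ : i ∈ Finset.univ) => hdegout i)]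
    rw [Finset.sum_const, Finset.card_univ, Fintype.card_fin, nsmul_eq_mul]
    have hn2 : (n : ℝ) = 2 * ((n / 2 : ℕ) : ℝ) := by
      rw [hm2, hm]; push_cast; ring
    rw [hn2]
    try ring
  -- nonnegativity of EW, NW
  have hEW : 0 ≤ ∑ i : Fin n, ∑ j : Fin n,
      if G.Adj i j ∧ sameSide n i j then x i j else 0 := by
    apply Finset.sum_nonneg; intro i _
    apply Finset.sum_nonneg; intro j _
    by_cases h1 : G.Adj i j ∧ sameSide n i j
    · rw [if_pos h1]; exact hnn i j (G.ne_of_adj h1.1)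
    · rw [if_neg h1]
  have hNW : 0 ≤ ∑ i : Fin n, ∑ j : Fin n,
      if i ≠ j ∧ sameSide n i j ∧ ¬ G.Adj i j then x i j else 0 := by
    apply Finset.sum_nonneg; intro i _
    apply Finset.sum_nonneg; intro j _
    by_cases h1 : i ≠ j ∧ sameSide n i j ∧ ¬ G.Adj i j
    · rw [if_pos h1]; exact hnn i j h1.1
    · rw [if_neg h1]
  -- final arithmetic
  set EW := ∑ i : Fin n, ∑ j : Fin n, if G.Adj i j ∧ sameSide n i j then x i j else 0
    with hEWdef
  set EO := ∑ i : Fin n, ∑ j : Fin n, if G.Adj i j ∧ ¬ sameSide n i j then x i j else 0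
    with hEOdef
  set NW := ∑ i : Fin n, ∑ j : Fin n, if i ≠ j ∧ sameSide n i j ∧ ¬ G.Adj i j then x i j else 0
    with hNWdef
  set W := ∑ i : Fin n, ∑ j : Fin n, if i ≠ j ∧ sameSide n i j then x i j else 0 with hWdef
  set C := ∑ i : Fin n, ∑ j : Fin n, if ¬ sameSide n i j then x i j else 0 with hCdef
  set Mr := ((n / 2 : ℕ) : ℝ) with hMrdef
  set E := (dout : ℝ) with hEdef
  set D := (din : ℝ) with hDdef
  clear_value EW EO NW W C Mr E D
  -- numeric facts
  have hMr2 : (2:ℝ) ≤ Mr := by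
    rw [hMrdef]
    have h9 : (2:ℕ) ≤ n / 2 := by omega
    exact_mod_cast h9
  have hnMr : (n : ℝ) = 2 * Mr := by
    rw [hMrdef, hm2, hm]; push_cast; ring
  have hDle : D ≤ Mr - 1 := by
    rw [hDdef, hMrdef]
    have h1 : din + 1 ≤ n / 2 := by omega
    have h2 : ((din + 1 : ℕ) : ℝ) ≤ ((n / 2 : ℕ) : ℝ) := by exact_mod_cast h1
    push_cast at h2
    linarith
  have hDE : D - E ≥ Mr / 2 - 1 := by
    rw [hnMr] at h
    rw [hEdef, hDdef]
    linarith [h]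
  have hEnn : (0:ℝ) ≤ E := by rw [hEdef]; positivity
  have hs1 : E * C ≤ Mr * EO + E * W := hstar1
  have hs2 : (2 * D + 2 - Mr) * NW ≤ 2 * (Mr - 1 - D) * EW := hstar2
  have hWs : W = EW + NW := hWsplit
  have hC : C = 2 * Mr ^ 2 - W := by
    have h1 : W + C = (n:ℝ)^2/2 := htotal
    rw [hnMr] at h1
    have h2 : (2*Mr)^2/2 = 2*Mr^2 := by ring
    linarith
  clear hstar1 hstar2 hWsplit htotal hsum hdegin hdegout hsameS hoppS hcnt hnn htri hper
    hsymm hreg12 hreg0 hfeas hEWdef hEOdef hNWdef hWdef hCdef hMrdef hEdef hDdef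
    h hdin1 hdin2 hdout hm hm2 hn4
  -- key: (Mr - 2E) * EW - 2 E * NW >= 0
  have hgoal2 : 2 * Mr * E ≤ EW + EO := by
    have hkey : 0 ≤ (Mr - 2 * E) * EW - 2 * E * NW := by
      have hKpos : 2 * E ≤ 2 * D + 2 - Mr := by linarith
      by_cases hE0 : E = 0
      · rw [hE0]
        have hMnn : (0:ℝ) ≤ Mr := by linarith
        nlinarith [mul_nonneg hMnn hEW]
      · have hEpos : 0 < E := lt_of_le_of_ne hEnn (fun hc => hE0 hc.symm)
        have hK : 0 < 2 * D + 2 - Mr := by linarith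
        have h1 : (Mr - 2 * E) * (2 * D + 2 - Mr) ≥ 4 * E * (Mr - 1 - D) := by
          have hX : 0 ≤ D - E + 1 - Mr / 2 := by linarith
          have hMnn : (0:ℝ) ≤ Mr := by linarith
          nlinarith [mul_nonneg hMnn hX]
        have h2 : 0 ≤ (2 * D + 2 - Mr) * ((Mr - 2 * E) * EW - 2 * E * NW) := by
          have h3 : 2 * E * ((2 * D + 2 - Mr) * NW) ≤ 2 * E * (2 * (Mr - 1 - D) * EW) :=
            mul_le_mul_of_nonneg_left hs2 (by linarith)
          have h4 : (4 * E * (Mr - 1 - D)) * EW ≤ ((Mr - 2 * E) * (2 * D + 2 - Mr)) * EW :=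
            mul_le_mul_of_nonneg_right h1 hEW
          nlinarith [h3, h4]
        exact nonneg_of_mul_nonneg_right h2 hK
    have hMrpos : (0:ℝ) < Mr := by linarith
    have hchain : Mr * (EW + EO) ≥ 2 * Mr ^ 2 * E := by
      have e1 : Mr * EO ≥ E * C - E * W := by linarith
      have e2 : E * C = 2 * Mr ^ 2 * E - E * W := by rw [hC, hWs]; ring
      have e3 : E * W = E * EW + E * NW := by rw [hWs]; ring
      nlinarith [e1, e2, e3, hkey]
    have h5 : Mr * (2 * Mr * E) ≤ Mr * (EW + EO) := by nlinarith [hchain]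
    exact (mul_le_mul_iff_right₀ (by linarith : (0:ℝ) < Mr)).mp h5
  -- conclude
  have hfin : LPobj n G (cutVec n) * 2 ≤ LPobj n G x * 2 := by
    rw [hcut, hobj]
    linarith [hgoal2]
  linarith [hfin]
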